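/- Let g be a finite simple graph, let h be a minimal triangulation of g, and let d be a proper tree decomposition of h. Then d is a proper tree decomposition of g, and saturate(g,d) = h. -/

import Mathlib

open SimpleGraph

/-- A (candidate) tree decomposition: a finite tree together with a bag for each tree node. -/
structure TreeDecomp (V : Type) where
  T : Type
  tFinite : Finite T
  tree : SimpleGraph T
  isTree : tree.IsTree
  β : T → Set V

/-- The set of bags of a tree decomposition. -/
def TreeDecomp.bags {V : Type} (d : TreeDecomp V) : Set (Set V) := Set.range d.β

/-- `d` is a tree decomposition of the graph `g`. -/
def IsTD {V : Type} (g : SimpleGraph V) (d : TreeDecomp V) : Prop :=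
  (∀ v : V, ∃ i : d.T, v ∈ d.β i) ∧
  (∀ u v : V, g.Adj u v → ∃ i : d.T, u ∈ d.β i ∧ v ∈ d.β i) ∧
  (∀ (i j k : d.T) (p : d.tree.Walk i k),
    p.IsPath → j ∈ p.support → d.β i ∩ d.β k ⊆ d.β j)

/-- `d' ⊑ d`: every bag of `d'` is contained in some bag of `d`. -/
def Subsumes {V : Type} (d' d : TreeDecomp V) : Prop :=
  ∀ b ∈ d'.bags, ∃ b' ∈ d.bags, b ⊆ b'

/-- `d'` strictly subsumes `d`. -/
def StrictlySubsumes {V : Type} (d' d : TreeDecomp V) : Prop :=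
  Subsumes d' d ∧ ¬ d.bags ⊆ d'.bags

/-- `d` is a proper tree decomposition of `g`. -/
def IsProperTD {V : Type} (g : SimpleGraph V) (d : TreeDecomp V) : Prop :=
  IsTD g d ∧ ∀ d' : TreeDecomp V, IsTD g d' → ¬ StrictlySubsumes d' d

/-- The graph obtained from `g` by saturating every bag of `d`. -/
def saturate {V : Type} (g : SimpleGraph V) (d : TreeDecomp V) : SimpleGraph V where
  Adj u v := g.Adj u v ∨ (u ≠ v ∧ ∃ i : d.T, u ∈ d.β i ∧ v ∈ d.β i)
  symm := by
    constructor
    intro u v h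
    rcases h with h | ⟨hne, i, hu, hv⟩
    · exact Or.inl h.symm
    · exact Or.inr ⟨hne.symm, i, hv, hu⟩
  loopless := by
    constructor
    intro u h
    rcases h with h | ⟨hne, _⟩
    · exact g.loopless.irrefl u h
    · exact hne rfl

/-- A graph is chordal if every cycle of length greater than three has a chord,
i.e. an edge joining two vertices of the cycle that are non-adjacent on the cycle. -/
def IsChordal {V : Type} (h : SimpleGraph V) : Prop :=
  ∀ (v : V) (c : h.Walk v v), c.IsCycle → 3 < c.length →
    ∃ u w : V, u ∈ c.support ∧ w ∈ c.support ∧ h.Adj u w ∧ s(u, w) ∉ c.edges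

/-- The set of maximal cliques of `g`. -/
def MaxClq {V : Type} (g : SimpleGraph V) : Set (Set V) :=
  {C | g.IsClique C ∧ ∀ C' : Set V, g.IsClique C' → C ⊆ C' → C = C'}

/-- The set of minimal triangulations of `g` (chordal supergraphs on the same vertex
set, minimal with respect to edge inclusion). -/
def MinTri {V : Type} (g : SimpleGraph V) : Set (SimpleGraph V) :=
  {h | g ≤ h ∧ IsChordal h ∧ ∀ h' : SimpleGraph V, g ≤ h' → h' < h → ¬ IsChordal h'}


section

open SimpleGraph Walk

variable {V : Type} {G : SimpleGraph V}

/-- Every edge of a walk joins consecutive `getVert`s. -/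
lemma edge_getVert {u v : V} (p : G.Walk u v) {e : Sym2 V} (he : e ∈ p.edges) :
    ∃ l, l < p.length ∧ e = s(p.getVert l, p.getVert (l + 1)) := by
  induction p with
  | nil => simp at he
  | cons h q ih =>
    rw [Walk.edges_cons, List.mem_cons] at he
    rcases he with rfl | he
    · exact ⟨0, by simp [Walk.getVert_zero, Walk.getVert_cons_succ]⟩
    · obtain ⟨l, hl, rfl⟩ := ih he
      exact ⟨l + 1, by simpa using hl, by simp [Walk.getVert_cons_succ]⟩

/-- First hit of a set along a walk. -/
lemma first_hit {u v : V} (p : G.Walk u v) (S : Set V) (hv : v ∈ S) :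
    ∃ z ∈ S, ∃ q : G.Walk u z, (∀ j ∈ q.support, j ∈ p.support) ∧
      (∀ j ∈ q.support, j ∈ S → j = z) := by
  induction p with
  | nil => exact ⟨_, hv, Walk.nil, by simp, fun j hj _ => by simpa using hj⟩
  | @cons a b c h q ih =>
    by_cases ha : a ∈ S
    · exact ⟨a, ha, Walk.nil, by simp, by simp⟩
    · obtain ⟨z, hz, r, hr1, hr2⟩ := ih hv
      refine ⟨z, hz, Walk.cons h r, ?_, ?_⟩
      · intro j hj
        rw [Walk.support_cons, List.mem_cons] at hj ⊢
        exact hj.imp id fun hj => hr1 j hj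
      · intro j hj hjS
        rw [Walk.support_cons, List.mem_cons] at hj
        rcases hj with rfl | hj
        · exact absurd hjS ha
        · exact hr2 j hj hjS

/-- Along a walk leaving a set `X`, some edge crosses out of `X`. -/
lemma cross_edge {u v : V} (p : G.Walk u v) (X : Set V) (hu : u ∈ X) (hv : v ∉ X) :
    ∃ z z', s(z, z') ∈ p.edges ∧ z ∈ X ∧ z' ∉ X := by
  induction p with
  | nil => exact absurd hu hv
  | @cons a b c h q ih =>
    by_cases hb : b ∈ X
    · obtain ⟨z, z', h1, h2, h3⟩ := ih hb hv
      exact ⟨z, z', by simp [h1], h2, h3⟩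
    · exact ⟨a, b, by simp, hu, hb⟩

lemma adj_of_support_pair {a b : V} (p : G.Walk a b) (hab : a ≠ b)
    (hs : ∀ j ∈ p.support, j = a ∨ j = b) : G.Adj a b := by
  obtain ⟨z, z', h1, h2, h3⟩ := cross_edge p {a} rfl (by simpa using (Ne.symm hab))
  have hz : z = a := h2
  have hz' : z' = b := by
    rcases hs z' (Walk.snd_mem_support_of_mem_edges p h1) with h | h
    · exact absurd h h3
    · exact h
  subst hz hz'
  exact p.adj_of_mem_edges h1

/-- Shortcut a path across a chord. -/
lemma shortcut {x y : V} (p : G.Walk x y) (hp : p.IsPath) {u w : V}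
    (hu : u ∈ p.support) (hw : w ∈ p.support) (huw : G.Adj u w)
    (hne : s(u, w) ∉ p.edges) :
    ∃ q : G.Walk x y, q.length < p.length ∧ ∀ j ∈ q.support, j ∈ p.support := by
  classical
  induction p with
  | nil =>
    simp only [Walk.support_nil, List.mem_singleton] at hu hw
    exact absurd (hu.trans hw.symm) huw.ne
  | @cons a b c h q ih =>
    simp only [Walk.support_cons, List.mem_cons] at hu hw
    by_cases hua : u = a
    · subst hua
      have hwq : w ∈ q.support := by
        rcases hw with rfl | hw
        · exact absurd rfl huw.ne
        · exact hw
      by_cases hwb : w = b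
      · subst hwb
        exact absurd (by simp) hne
      · refine ⟨Walk.cons huw (q.dropUntil w hwq), ?_, ?_⟩
        · have h1 : (q.takeUntil w hwq).length + (q.dropUntil w hwq).length = q.length := by
            have := congr_arg Walk.length (q.take_spec hwq)
            rwa [Walk.length_append] at this
          have h2 : 0 < (q.takeUntil w hwq).length := by
            rcases Nat.eq_zero_or_pos (q.takeUntil w hwq).length with h0 | h0
            · exfalso
              have : (q.takeUntil w hwq).Nil := Walk.nil_iff_length_eq.mpr h0
              have hbw : b = w := this.eq ▸ rfl
              exact hwb hbw.symm
            · exact h0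
          simp only [Walk.length_cons]
          omega
        · intro j hj
          simp only [Walk.support_cons, List.mem_cons] at hj ⊢
          exact hj.imp id fun hj => q.support_dropUntil_subset hwq hj
    · by_cases hwa : w = a
      · subst hwa
        have huq : u ∈ q.support := by
          rcases hu with rfl | hu
          · exact absurd rfl hua
          · exact hu
        by_cases hub : u = b
        · subst hub
          exact absurd (by rw [Sym2.eq_swap]; simp) hne
        · refine ⟨Walk.cons huw.symm (q.dropUntil u huq), ?_, ?_⟩
          · have h1 : (q.takeUntil u huq).length + (q.dropUntil u huq).length = q.length := by
              have := congr_arg Walk.length (q.take_spec huq)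
              rwa [Walk.length_append] at this
            have h2 : 0 < (q.takeUntil u huq).length := by
              rcases Nat.eq_zero_or_pos (q.takeUntil u huq).length with h0 | h0
              · exfalso
                have : (q.takeUntil u huq).Nil := Walk.nil_iff_length_eq.mpr h0
                have hbw : b = u := this.eq ▸ rfl
                exact hub hbw.symm
              · exact h0
            simp only [Walk.length_cons]
            omega
          · intro j hj
            simp only [Walk.support_cons, List.mem_cons] at hj ⊢
            exact hj.imp id fun hj => q.support_dropUntil_subset huq hj
      · have huq : u ∈ q.support := hu.resolve_left hua
        have hwq : w ∈ q.support := hw.resolve_left hwa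
        obtain ⟨r, hr1, hr2⟩ := ih hp.of_cons huq hwq (fun hmem => hne (by simp [hmem]))
        exact ⟨Walk.cons h r, by simpa using hr1, by
          intro j hj
          simp only [Walk.support_cons, List.mem_cons] at hj ⊢
          exact hj.imp id fun hj => hr2 j hj⟩

end

section

open SimpleGraph Walk

variable {V : Type} {G : SimpleGraph V}

/-- Reachability within a set of vertices. -/
def ReachIn (G : SimpleGraph V) (s : Set V) (a b : V) : Prop :=
  ∃ p : G.Walk a b, ∀ x ∈ p.support, x ∈ s

lemma ReachIn.refl {s : Set V} {a : V} (ha : a ∈ s) : ReachIn G s a a :=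
  ⟨Walk.nil, by simpa using ha⟩

lemma ReachIn.symm {s : Set V} {a b : V} (h : ReachIn G s a b) : ReachIn G s b a := by
  obtain ⟨p, hp⟩ := h
  exact ⟨p.reverse, by simpa [Walk.support_reverse] using hp⟩

lemma ReachIn.trans {s : Set V} {a b c : V} (h1 : ReachIn G s a b) (h2 : ReachIn G s b c) :
    ReachIn G s a c := by
  obtain ⟨p, hp⟩ := h1
  obtain ⟨q, hq⟩ := h2
  refine ⟨p.append q, fun x hx => ?_⟩
  rw [Walk.mem_support_append_iff] at hx
  exact hx.elim (hp x) (hq x)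

lemma ReachIn.adj {s : Set V} {a b : V} (hadj : G.Adj a b) (ha : a ∈ s) (hb : b ∈ s) :
    ReachIn G s a b :=
  ⟨Walk.cons hadj Walk.nil, by simp [ha, hb]⟩

lemma ReachIn.mem_left {s : Set V} {a b : V} (h : ReachIn G s a b) : a ∈ s := by
  obtain ⟨p, hp⟩ := h; exact hp a p.start_mem_support

lemma ReachIn.mem_right {s : Set V} {a b : V} (h : ReachIn G s a b) : b ∈ s := by
  obtain ⟨p, hp⟩ := h; exact hp b p.end_mem_support

/-- `S` separates `a` from `b` within the vertex set `s`. -/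
def SepIn (G : SimpleGraph V) (s : Set V) (a b : V) (S : Set V) : Prop :=
  S ⊆ s ∧ a ∉ S ∧ b ∉ S ∧ ¬ ReachIn G (s \ S) a b

lemma SepIn.symm {s S : Set V} {a b : V} (h : SepIn G s a b S) : SepIn G s b a S :=
  ⟨h.1, h.2.2.1, h.2.1, fun hr => h.2.2.2 hr.symm⟩

lemma sepIn_exists {s : Set V} {a b : V} (ha : a ∈ s) (hb : b ∈ s) (hab : a ≠ b)
    (hnadj : ¬ G.Adj a b) : SepIn G s a b (s \ {a, b}) := by
  refine ⟨Set.diff_subset, by simp, by simp, ?_⟩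
  rintro ⟨p, hp⟩
  refine hnadj (adj_of_support_pair p hab fun j hj => ?_)
  have h2 := hp j hj
  simp only [Set.mem_diff, Set.mem_insert_iff, Set.mem_singleton_iff, not_and, not_not] at h2
  by_contra hcon
  push_neg at hcon
  have h3 := h2.2 h2.1
  tauto

lemma sepIn_min_exists [Fintype V] {s : Set V} {a b : V} (ha : a ∈ s) (hb : b ∈ s)
    (hab : a ≠ b) (hnadj : ¬ G.Adj a b) :
    ∃ S, SepIn G s a b S ∧ ∀ S', SepIn G s a b S' → S.ncard ≤ S'.ncard := by
  have hne : {n | ∃ S, SepIn G s a b S ∧ S.ncard = n}.Nonempty :=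
    ⟨_, _, sepIn_exists ha hb hab hnadj, rfl⟩
  obtain ⟨S, hS, hcard⟩ := Nat.sInf_mem hne
  refine ⟨S, hS, fun S' hS' => ?_⟩
  rw [hcard]
  exact Nat.sInf_le ⟨S', hS', rfl⟩

/-- a path of minimum length among walks staying inside `X`. -/
lemma exists_min_walk {X : Set V} {x y : V}
    (h0 : ∃ w : G.Walk x y, ∀ j ∈ w.support, j ∈ X) :
    ∃ P : G.Walk x y, P.IsPath ∧ (∀ j ∈ P.support, j ∈ X) ∧
      ∀ w : G.Walk x y, (∀ j ∈ w.support, j ∈ X) → P.length ≤ w.length := by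
  classical
  obtain ⟨w0, hw0⟩ := h0
  have hne : {n | ∃ w : G.Walk x y, (∀ j ∈ w.support, j ∈ X) ∧ w.length = n}.Nonempty :=
    ⟨_, w0, hw0, rfl⟩
  obtain ⟨w₁, hw₁, hlen⟩ := Nat.sInf_mem hne
  refine ⟨w₁.bypass, w₁.bypass_isPath, fun j hj => hw₁ j (w₁.support_bypass_subset hj), ?_⟩
  intro w hw
  calc w₁.bypass.length ≤ w₁.length := w₁.length_bypass_le
    _ ≤ w.length := by
        rw [hlen]
        exact Nat.sInf_le ⟨w, hw, rfl⟩

/-- Access path from `a` to any vertex of a minimum separator. -/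
lemma sep_access [Fintype V] {s S : Set V} {a b : V}
    (hS : SepIn G s a b S) (hmin : ∀ S', SepIn G s a b S' → S.ncard ≤ S'.ncard)
    {x : V} (hx : x ∈ S) :
    ∃ q : G.Walk a x, q.IsPath ∧ (∀ j ∈ q.support, j ∈ s ∧ (j ∈ S → j = x)) := by
  classical
  have hS' : ¬ SepIn G s a b (S \ {x}) := by
    intro hcon
    have := hmin _ hcon
    have hlt : (S \ {x}).ncard < S.ncard :=
      Set.ncard_diff_singleton_lt_of_mem hx (Set.toFinite S)
    omega
  have hreach : ReachIn G (s \ (S \ {x})) a b := by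
    by_contra hcon
    exact hS' ⟨fun z hz => hS.1 hz.1, by simp [hS.2.1], by simp [hS.2.2.1], hcon⟩
  obtain ⟨w, hw⟩ := hreach
  have hxw : x ∈ w.support := by
    by_contra hxw
    refine hS.2.2.2 ⟨w, fun j hj => ?_⟩
    have h1 := hw j hj
    simp only [Set.mem_diff, Set.mem_singleton_iff, not_and, not_not] at h1 ⊢
    exact ⟨h1.1, fun hjS => hxw (by rwa [h1.2 hjS] at hj)⟩
  obtain ⟨z, hzS, q, hq1, hq2⟩ := first_hit (w.takeUntil x hxw) S (by exact hx)
  have hzx : z = x := by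
    have hzsup : z ∈ w.support := w.support_takeUntil_subset hxw (hq1 z q.end_mem_support)
    have := hw z hzsup
    simp only [Set.mem_diff, Set.mem_singleton_iff, not_and, not_not] at this
    exact this.2 hzS
  subst hzx
  refine ⟨q.bypass, q.bypass_isPath, fun j hj => ?_⟩
  have hj' : j ∈ q.support := q.support_bypass_subset hj
  have hjw : j ∈ w.support := w.support_takeUntil_subset hxw (hq1 j hj')
  exact ⟨(hw j hjw).1, fun hjS => hq2 j hj' hjS⟩

/-- interior vertices of an access path are in the `a`-component. -/
lemma access_reach {s S : Set V} {a x : V} (q : G.Walk a x) (hq : q.IsPath)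
    (hsup : ∀ j ∈ q.support, j ∈ s ∧ (j ∈ S → j = x)) (hxS : x ∈ S) :
    ∀ j ∈ q.support, j ≠ x → ReachIn G (s \ S) a j := by
  classical
  intro j hj hjx
  refine ⟨q.takeUntil j hj, fun i hi => ?_⟩
  have hiq : i ∈ q.support := q.support_takeUntil_subset hj hi
  have h1 := hsup i hiq
  refine ⟨h1.1, fun hiS => ?_⟩
  have hix : i = x := h1.2 hiS
  subst hix
  -- i = x occurs in the prefix; but x is the endpoint and appears once
  have hdrop : i ∈ (q.dropUntil j hj).support := Walk.end_mem_support _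
  have hspec := q.take_spec hj
  have hnodup := hq.support_nodup
  rw [← hspec, Walk.support_append] at hnodup
  have hdisj := List.disjoint_of_nodup_append hnodup
  have hmemtail : i ∈ (q.dropUntil j hj).support.tail := by
    rw [(q.dropUntil j hj).support_eq_cons] at hdrop
    rcases hdrop with _ | h
    · exact absurd rfl hjx
    · assumption
  exact hdisj hi hmemtail

end

section

open SimpleGraph Walk

variable {V : Type} {G : SimpleGraph V}

lemma adj_of_length_eq_one {x y : V} (w : G.Walk x y) (h1 : w.length = 1) : G.Adj x y := by
  have h := w.adj_getVert_succ (i := 0) (by omega)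
  rwa [w.getVert_zero, show w.getVert 1 = y from h1 ▸ w.getVert_length] at h

/-- In a chordal graph, the vertices of a minimum separator are pairwise adjacent. -/
lemma sep_clique [Fintype V] (hch : IsChordal G) {s S : Set V} {a b : V}
    (hS : SepIn G s a b S) (hmin : ∀ S', SepIn G s a b S' → S.ncard ≤ S'.ncard)
    {x y : V} (hx : x ∈ S) (hy : y ∈ S) (hxy : x ≠ y) : G.Adj x y := by
  classical
  by_contra hnadj
  -- access paths
  obtain ⟨qax, hqax, hqaxs⟩ := sep_access hS hmin hx
  obtain ⟨qay, hqay, hqays⟩ := sep_access hS hmin hy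
  obtain ⟨qbx, hqbx, hqbxs⟩ := sep_access hS.symm (fun S' h' => hmin S' h'.symm) hx
  obtain ⟨qby, hqby, hqbys⟩ := sep_access hS.symm (fun S' h' => hmin S' h'.symm) hy
  set A : Set V := {j | ReachIn G (s \ S) a j} with hA
  set B : Set V := {j | ReachIn G (s \ S) b j} with hB
  have hAB : ∀ j, j ∈ A → j ∈ B → False := by
    intro j hjA hjB
    exact hS.2.2.2 (ReachIn.trans hjA (ReachIn.symm hjB))
  -- walks from x to y within A ∪ {x,y} and B ∪ {x,y}
  have hwalkA : ∃ w : G.Walk x y, ∀ j ∈ w.support, j ∈ A ∪ {x, y} := by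
    refine ⟨qax.reverse.append qay, fun j hj => ?_⟩
    rw [Walk.mem_support_append_iff, Walk.support_reverse, List.mem_reverse] at hj
    rcases hj with hj | hj
    · by_cases hjx : j = x
      · exact Or.inr (by simp [hjx])
      · exact Or.inl (access_reach qax hqax hqaxs hx j hj hjx)
    · by_cases hjy : j = y
      · exact Or.inr (by simp [hjy])
      · exact Or.inl (access_reach qay hqay hqays hy j hj hjy)
  have hwalkB : ∃ w : G.Walk x y, ∀ j ∈ w.support, j ∈ B ∪ {x, y} := by
    refine ⟨qbx.reverse.append qby, fun j hj => ?_⟩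
    rw [Walk.mem_support_append_iff, Walk.support_reverse, List.mem_reverse] at hj
    rcases hj with hj | hj
    · by_cases hjx : j = x
      · exact Or.inr (by simp [hjx])
      · exact Or.inl (access_reach qbx hqbx hqbxs hx j hj hjx)
    · by_cases hjy : j = y
      · exact Or.inr (by simp [hjy])
      · exact Or.inl (access_reach qby hqby hqbys hy j hj hjy)
  obtain ⟨P, hP, hPsup, hPmin⟩ := exists_min_walk hwalkA
  obtain ⟨Q, hQ, hQsup, hQmin⟩ := exists_min_walk hwalkB
  -- supports only meet in {x, y}
  have hmeet : ∀ j, j ∈ P.support → j ∈ Q.support → j = x ∨ j = y := by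
    intro j hjP hjQ
    rcases hPsup j hjP with hjA | hj
    · rcases hQsup j hjQ with hjB | hj
      · exact absurd (hAB j hjA hjB) not_false
      · simpa using hj
    · simpa using hj
  have hxS' : x ∉ A ∪ B := by
    rintro (hxa | hxa) <;> exact absurd (hxa.mem_right.2 hx) not_false
  -- lengths at least 2
  have hlenP : 2 ≤ P.length := by
    rcases Nat.lt_or_ge P.length 2 with hlt | hge
    · interval_cases hlen : P.length
      · exact absurd (Walk.eq_of_length_eq_zero hlen) hxy
      · exact absurd (adj_of_length_eq_one P hlen) hnadj
    · exact hge
  have hlenQ : 2 ≤ Q.length := by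
    rcases Nat.lt_or_ge Q.length 2 with hlt | hge
    · interval_cases hlen : Q.length
      · exact absurd (Walk.eq_of_length_eq_zero hlen) hxy
      · exact absurd (adj_of_length_eq_one Q hlen) hnadj
    · exact hge
  -- build the cycle
  set C : G.Walk x x := P.append Q.reverse with hC
  have hCsupP : ∀ j ∈ C.support, j ∈ P.support ∨ j ∈ Q.support := by
    intro j hj
    rw [hC, Walk.mem_support_append_iff, Walk.support_reverse, List.mem_reverse] at hj
    exact hj
  have hedgePC : ∀ e ∈ P.edges, e ∈ C.edges := by
    intro e he
    rw [hC, Walk.edges_append, List.mem_append]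
    exact Or.inl he
  have hedgeQC : ∀ e ∈ Q.edges, e ∈ C.edges := by
    intro e he
    rw [hC, Walk.edges_append, List.mem_append, Walk.edges_reverse, List.mem_reverse]
    exact Or.inr he
  have hCcyc : C.IsCycle := by
    rw [Walk.isCycle_def]
    refine ⟨?_, ?_, ?_⟩
    · -- trail: edges nodup
      rw [Walk.isTrail_def, hC, Walk.edges_append]
      refine List.Nodup.append hP.isTrail.edges_nodup hQ.reverse.isTrail.edges_nodup ?_
      intro e heP heQR
      rw [Walk.edges_reverse, List.mem_reverse] at heQR
      induction e with
      | h c d =>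
        have hcP := P.fst_mem_support_of_mem_edges heP
        have hdP := P.snd_mem_support_of_mem_edges heP
        have hcQ := Q.fst_mem_support_of_mem_edges heQR
        have hdQ := Q.snd_mem_support_of_mem_edges heQR
        have hcd : G.Adj c d := P.adj_of_mem_edges heP
        rcases hmeet c hcP hcQ with rfl | rfl <;> rcases hmeet d hdP hdQ with rfl | rfl
        · exact hcd.ne rfl
        · exact hnadj hcd
        · exact hnadj hcd.symm
        · exact hcd.ne rfl
    · intro hnil
      have := congr_arg Walk.length hnil
      rw [hC, Walk.length_append, Walk.length_reverse] at this
      simp only [Walk.length_nil] at this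
      omega
    · -- support tail nodup
      have hsupC : C.support = P.support ++ Q.reverse.support.tail := by
        rw [hC, Walk.support_append]
      have htail : C.support.tail = P.support.tail ++ Q.reverse.support.tail := by
        rw [hsupC, P.support_eq_cons]
        simp
      rw [htail]
      refine List.Nodup.append (hP.support_nodup.tail) (hQ.reverse.support_nodup.tail) ?_
      intro j hjP hjQR
      have hjP' : j ∈ P.support := by
        rw [P.support_eq_cons]; exact List.mem_cons_of_mem _ hjP
      have hjQ' : j ∈ Q.support := by
        have : j ∈ Q.reverse.support := by
          rw [Q.reverse.support_eq_cons]; exact List.mem_cons_of_mem _ hjQR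
        rwa [Walk.support_reverse, List.mem_reverse] at this
      rcases hmeet j hjP' hjQ' with rfl | rfl
      · have := hP.support_nodup
        rw [P.support_eq_cons] at this
        exact (List.nodup_cons.mp this).1 hjP
      · have := hQ.reverse.support_nodup
        rw [Q.reverse.support_eq_cons] at this
        exact (List.nodup_cons.mp this).1 hjQR
  have hClen : 3 < C.length := by
    rw [hC, Walk.length_append, Walk.length_reverse]
    omega
  obtain ⟨u, w, huC, hwC, huw, hne⟩ := hch x C hCcyc hClen
  -- now derive a contradiction
  have hshortP : ¬ (u ∈ P.support ∧ w ∈ P.support) := by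
    rintro ⟨huP, hwP⟩
    obtain ⟨q, hql, hqs⟩ := shortcut P hP huP hwP huw (fun hmem => hne (hedgePC _ hmem))
    have := hPmin q (fun j hj => hPsup j (hqs j hj))
    omega
  have hshortQ : ¬ (u ∈ Q.support ∧ w ∈ Q.support) := by
    rintro ⟨huQ, hwQ⟩
    obtain ⟨q, hql, hqs⟩ := shortcut Q hQ huQ hwQ huw
      (fun hmem => hne (hedgeQC _ hmem))
    have := hQmin q (fun j hj => hQsup j (hqs j hj))
    omega
  have hPx : x ∈ P.support := P.start_mem_support
  have hPy : y ∈ P.support := P.end_mem_support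
  have hQx : x ∈ Q.support := Q.start_mem_support
  have hQy : y ∈ Q.support := Q.end_mem_support
  rcases hCsupP u huC with huP | huQ <;> rcases hCsupP w hwC with hwP | hwQ
  · exact hshortP ⟨huP, hwP⟩
  · -- u ∈ P, w ∈ Q
    have huA : u ∈ A := by
      rcases hPsup u huP with h | h
      · exact h
      · exfalso
        simp only [Set.mem_insert_iff, Set.mem_singleton_iff] at h
        rcases h with rfl | rfl
        · exact hshortQ ⟨hQx, hwQ⟩
        · exact hshortQ ⟨hQy, hwQ⟩
    have hwB : w ∈ B := by
      rcases hQsup w hwQ with h | h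
      · exact h
      · exfalso
        simp only [Set.mem_insert_iff, Set.mem_singleton_iff] at h
        rcases h with rfl | rfl
        · exact hshortP ⟨huP, hPx⟩
        · exact hshortP ⟨huP, hPy⟩
    refine hAB w ?_ hwB
    exact ReachIn.trans huA (ReachIn.adj huw huA.mem_right hwB.mem_right)
  · -- w ∈ P, u ∈ Q : symmetric
    have hwA : w ∈ A := by
      rcases hPsup w hwP with h | h
      · exact h
      · exfalso
        simp only [Set.mem_insert_iff, Set.mem_singleton_iff] at h
        rcases h with rfl | rfl
        · exact hshortQ ⟨huQ, hQx⟩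
        · exact hshortQ ⟨huQ, hQy⟩
    have huB : u ∈ B := by
      rcases hQsup u huQ with h | h
      · exact h
      · exfalso
        simp only [Set.mem_insert_iff, Set.mem_singleton_iff] at h
        rcases h with rfl | rfl
        · exact hshortP ⟨hPx, hwP⟩
        · exact hshortP ⟨hPy, hwP⟩
    refine hAB u ?_ huB
    exact ReachIn.trans hwA (ReachIn.adj huw.symm hwA.mem_right huB.mem_right)
  · exact hshortQ ⟨huQ, hwQ⟩

end

section

open SimpleGraph Walk

variable {T : Type} {t : SimpleGraph T}

lemma takeUntil_getVert_one [DecidableEq T] {u v z : T} (p : t.Walk u v)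
    (hz : z ∈ p.support) (hne : u ≠ z) :
    (p.takeUntil z hz).getVert 1 = p.getVert 1 := by
  cases p with
  | nil =>
    rw [Walk.mem_support_nil_iff] at hz
    exact absurd hz.symm hne
  | cons h q =>
    rw [Walk.takeUntil]
    rw [dif_neg hne]
    simp only [Walk.getVert_cons_succ, Walk.getVert_zero]

/-- In a tree, two distinct paths leaving `u` towards members of a path-closed set force `u`
into the set. -/
lemma gate_lemma [Finite T] (ht : t.IsTree) (S : Set T)
    (hS : ∀ (i k : T) (p : t.Walk i k), p.IsPath → i ∈ S → k ∈ S → ∀ j ∈ p.support, j ∈ S)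
    {s0 : T} (hs0 : s0 ∈ S) (tt : T) :
    ∃ gt ∈ S, ∀ (k : T) (p : t.Walk tt k), k ∈ S → p.IsPath → gt ∈ p.support := by
  classical
  cases nonempty_fintype T
  -- strong induction on distance to s0
  suffices H : ∀ (n : ℕ) (tt : T), t.dist tt s0 = n →
      ∃ gt ∈ S, ∀ (k : T) (p : t.Walk tt k), k ∈ S → p.IsPath → gt ∈ p.support by
    exact H _ tt rfl
  intro n
  induction n using Nat.strong_induction_on with
  | _ n ih =>
    intro tt hdist
    by_cases htS : tt ∈ S
    · exact ⟨tt, htS, fun k p hk hp => p.start_mem_support⟩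
    · have hne : tt ≠ s0 := fun h => htS (h ▸ hs0)
      obtain ⟨p0, hp0len⟩ := ht.isConnected.exists_walk_length_eq_dist tt s0
      have hp0path : p0.IsPath := p0.isPath_of_length_eq_dist hp0len
      cases hp : p0 with
      | nil => exact absurd rfl hne
      | @cons _ z _ hadj q =>
        subst hp
        have hqpath : q.IsPath := hp0path.of_cons
        have hqdist : t.dist z s0 < n := by
          have h1 : t.dist z s0 ≤ q.length := SimpleGraph.dist_le q
          have h2 : q.length + 1 = n := by
            rw [← hdist, ← hp0len]; simp [Walk.length_cons]
          omega
        obtain ⟨gt, hgtS, hgt⟩ := ih _ hqdist z rfl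
        refine ⟨gt, hgtS, fun k p hk hp => ?_⟩
        have hpne : tt ≠ k := fun h => htS (h ▸ hk)
        cases hpc : p with
        | nil => exact absurd rfl hpne
        | @cons _ y _ hadj' r =>
          subst hpc
          have hrpath : r.IsPath := hp.of_cons
          by_cases hyz : y = z
          · subst hyz
            have := hgt k r hk hrpath
            rw [Walk.support_cons]
            exact List.mem_cons_of_mem _ this
          · -- divergence: show tt lies on a path between k and s0, so tt ∈ S, contradiction
            exfalso
            -- supports of (cons hadj' r) and (cons hadj q) intersect only at tt
            have hdisj : ∀ j, j ∈ (Walk.cons hadj' r).support →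
                j ∈ (Walk.cons hadj q).support → j = tt := by
              intro j hj1 hj2
              by_contra hjtt
              have h1 : (Walk.cons hadj' r).takeUntil j hj1 =
                  (Walk.cons hadj q).takeUntil j hj2 := by
                have e1 : ((Walk.cons hadj' r).takeUntil j hj1).IsPath := hp.takeUntil hj1
                have e2 : ((Walk.cons hadj q).takeUntil j hj2).IsPath := hp0path.takeUntil hj2
                have := ht.IsAcyclic.path_unique ⟨_, e1⟩ ⟨_, e2⟩
                exact congr_arg Subtype.val this
              have g1 := takeUntil_getVert_one (Walk.cons hadj' r) hj1 (Ne.symm hjtt)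
              have g2 := takeUntil_getVert_one (Walk.cons hadj q) hj2 (Ne.symm hjtt)
              rw [h1, g2] at g1
              simp only [Walk.getVert_cons_succ, Walk.getVert_zero] at g1
              exact hyz g1.symm
            -- build path from k to s0 through tt
            set w : t.Walk k s0 := (Walk.cons hadj' r).reverse.append (Walk.cons hadj q)
              with hw
            have hwpath : w.IsPath := by
              rw [hw, Walk.isPath_def, Walk.support_append, Walk.support_reverse]
              rw [List.nodup_append]
              refine ⟨by rw [List.nodup_reverse]; exact hp.support_nodup, ?_, ?_⟩
              · have := hp0path.support_nodup
                rw [Walk.support_eq_cons (Walk.cons hadj q)] at this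
                exact this.tail
              · intro j hj1 j' hj2 hjj
                subst hjj
                rw [List.mem_reverse] at hj1
                have hj2' : j ∈ (Walk.cons hadj q).support := by
                  rw [Walk.support_eq_cons (Walk.cons hadj q)]
                  exact List.mem_cons_of_mem _ hj2
                have := hdisj j hj1 hj2'
                subst this
                have := hp0path.support_nodup
                rw [Walk.support_eq_cons (Walk.cons hadj q)] at this
                simp only [Walk.support_cons] at hj2 this ⊢
                exact (List.nodup_cons.mp this).1 hj2
            have htt : tt ∈ w.support := by
              rw [hw, Walk.mem_support_append_iff]
              exact Or.inr (Walk.start_mem_support _)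
            exact htS (hS k s0 w hwpath hk hs0 tt htt)

end

section

open SimpleGraph Walk

/-- Helly property: a set of vertices pairwise sharing bags lies in a common bag. -/
lemma helly {V : Type} (d : TreeDecomp V)
    (hconn : ∀ (i j k : d.T) (p : d.tree.Walk i k), p.IsPath → j ∈ p.support →
      d.β i ∩ d.β k ⊆ d.β j)
    (C : Finset V)
    (hcov : ∀ v ∈ C, ∃ i, v ∈ d.β i)
    (hpair : ∀ u v, u ∈ C → v ∈ C → u ≠ v → ∃ i, u ∈ d.β i ∧ v ∈ d.β i) :
    ∃ i, ∀ v ∈ C, v ∈ d.β i := by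
  classical
  have : Finite d.T := d.tFinite
  induction C using Finset.induction_on with
  | empty =>
    obtain ⟨i⟩ := d.isTree.isConnected.nonempty
    exact ⟨i, by simp⟩
  | @insert x C hxC ih =>
    obtain ⟨tnode, htnode⟩ := ih (fun v hv => hcov v (Finset.mem_insert_of_mem hv))
      (fun u v hu hv hne => hpair u v (Finset.mem_insert_of_mem hu)
        (Finset.mem_insert_of_mem hv) hne)
    obtain ⟨s0, hs0⟩ := hcov x (Finset.mem_insert_self x C)
    have hS : ∀ (i k : d.T) (p : d.tree.Walk i k), p.IsPath → i ∈ {i | x ∈ d.β i} →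
        k ∈ {i | x ∈ d.β i} → ∀ j ∈ p.support, j ∈ {i | x ∈ d.β i} := by
      intro i k p hp hi hk j hj
      exact hconn i j k p hp hj ⟨hi, hk⟩
    obtain ⟨gt, hgtS, hgt⟩ := gate_lemma d.isTree {i | x ∈ d.β i} hS hs0 tnode
    refine ⟨gt, fun v hv => ?_⟩
    rcases Finset.mem_insert.mp hv with rfl | hvC
    · exact hgtS
    · have hvx : x ≠ v := fun h => hxC (h ▸ hvC)
      obtain ⟨iv, hxiv, hviv⟩ := hpair x v (Finset.mem_insert_self x C)
        (Finset.mem_insert_of_mem hvC) hvx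
      obtain ⟨w⟩ := d.isTree.isConnected.preconnected tnode iv
      have hmem : gt ∈ (w.toPath : d.tree.Walk tnode iv).support :=
        hgt iv w.toPath hxiv w.toPath.2
      exact hconn tnode gt iv w.toPath w.toPath.2 hmem ⟨htnode v hvC, hviv⟩

end

section

open SimpleGraph Walk

variable {T₁ T₂ : Type}

/-- Two graphs glued by a single bridge edge between `a` and `b`. -/
def glueG (t₁ : SimpleGraph T₁) (t₂ : SimpleGraph T₂) (a : T₁) (b : T₂) :
    SimpleGraph (T₁ ⊕ T₂) where
  Adj m m' :=
    match m, m' with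
    | .inl x, .inl y => t₁.Adj x y
    | .inl x, .inr y => x = a ∧ y = b
    | .inr x, .inl y => x = b ∧ y = a
    | .inr x, .inr y => t₂.Adj x y
  symm := by
    constructor
    rintro (x | x) (y | y) h
    · exact h.symm
    · exact ⟨h.2, h.1⟩
    · exact ⟨h.2, h.1⟩
    · exact h.symm
  loopless := by
    constructor
    rintro (x | x) h
    · exact t₁.loopless.irrefl x h
    · exact t₂.loopless.irrefl x h

variable {t₁ : SimpleGraph T₁} {t₂ : SimpleGraph T₂} {a : T₁} {b : T₂}

@[simp] lemma glueG_adj_ll {x y : T₁} : (glueG t₁ t₂ a b).Adj (.inl x) (.inl y) ↔ t₁.Adj x y :=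
  Iff.rfl

@[simp] lemma glueG_adj_rr {x y : T₂} : (glueG t₁ t₂ a b).Adj (.inr x) (.inr y) ↔ t₂.Adj x y :=
  Iff.rfl

@[simp] lemma glueG_adj_lr {x : T₁} {y : T₂} :
    (glueG t₁ t₂ a b).Adj (.inl x) (.inr y) ↔ x = a ∧ y = b := Iff.rfl

@[simp] lemma glueG_adj_rl {x : T₂} {y : T₁} :
    (glueG t₁ t₂ a b).Adj (.inr x) (.inl y) ↔ x = b ∧ y = a := Iff.rfl

/-- the bridge edge -/
abbrev bridge (t₁ : SimpleGraph T₁) (t₂ : SimpleGraph T₂) (a : T₁) (b : T₂) : Sym2 (T₁ ⊕ T₂) :=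
  s(Sum.inl a, Sum.inr b)

lemma glue_cross_lr : ∀ {m m' : T₁ ⊕ T₂} (W : (glueG t₁ t₂ a b).Walk m m') {x : T₁} {y : T₂},
    m = .inl x → m' = .inr y → bridge t₁ t₂ a b ∈ W.edges := by
  intro m m' W
  induction W with
  | nil =>
    intro x y h1 h2
    rw [h1] at h2
    exact absurd h2 (by simp)
  | @cons u mm w h W ih =>
    intro x y h1 h2
    subst h1 h2
    cases mm with
    | inl z =>
      have := ih rfl rfl
      rw [Walk.edges_cons]
      exact List.mem_cons_of_mem _ this
    | inr z =>
      rw [glueG_adj_lr] at h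
      have heq : bridge t₁ t₂ a b = s(Sum.inl x, Sum.inr z) := by rw [h.1, h.2]
      rw [Walk.edges_cons, ← heq]
      exact List.mem_cons_self

lemma glue_cross_rl {m m' : T₁ ⊕ T₂} (W : (glueG t₁ t₂ a b).Walk m m') {x : T₂} {y : T₁}
    (h1 : m = .inr x) (h2 : m' = .inl y) : bridge t₁ t₂ a b ∈ W.edges := by
  have := glue_cross_lr W.reverse h2 h1
  rwa [Walk.edges_reverse, List.mem_reverse] at this

lemma glue_no_cross : ∀ {m m' : T₁ ⊕ T₂} (W : (glueG t₁ t₂ a b).Walk m m'),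
    bridge t₁ t₂ a b ∉ W.edges → ∀ j ∈ W.support, j.isLeft = m.isLeft := by
  intro m m' W
  induction W with
  | nil =>
    intro _ j hj
    rw [Walk.support_nil, List.mem_singleton] at hj
    rw [hj]
  | @cons u mm w h W ih =>
    intro hbr j hj
    rw [Walk.edges_cons] at hbr
    have hbr2 : bridge t₁ t₂ a b ∉ W.edges := fun hc => hbr (List.mem_cons_of_mem _ hc)
    have hside : mm.isLeft = u.isLeft := by
      cases u with
      | inl x =>
        cases mm with
        | inl z => rfl
        | inr z =>
          rw [glueG_adj_lr] at h
          have heq : bridge t₁ t₂ a b = s(Sum.inl x, Sum.inr z) := by rw [h.1, h.2]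
          exact absurd (heq ▸ List.mem_cons_self (a := s(Sum.inl x, Sum.inr z)) (l := W.edges)) hbr
      | inr x =>
        cases mm with
        | inl z =>
          rw [glueG_adj_rl] at h
          have heq : bridge t₁ t₂ a b = s(Sum.inr x, Sum.inl z) := by
            rw [h.1, h.2, Sym2.eq_swap]
          exact absurd (heq ▸ List.mem_cons_self (a := s(Sum.inr x, Sum.inl z)) (l := W.edges)) hbr
        | inr z => rfl
    rw [Walk.support_cons, List.mem_cons] at hj
    rcases hj with rfl | hj
    · rfl
    · rw [ih hbr2 j hj, hside]

lemma glue_projL : ∀ {m m' : T₁ ⊕ T₂} (W : (glueG t₁ t₂ a b).Walk m m') {x y : T₁},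
    m = .inl x → m' = .inl y → (∀ j ∈ W.support, ∃ z, j = Sum.inl z) →
    ∃ W' : t₁.Walk x y, W.support = W'.support.map Sum.inl ∧
      W.edges = W'.edges.map (Sym2.map Sum.inl) := by
  intro m m' W
  induction W with
  | nil =>
    rintro x y rfl h2 _
    obtain rfl : x = y := by injection h2
    exact ⟨Walk.nil, by simp, by simp⟩
  | @cons u mm w h W ih =>
    rintro x y rfl rfl hall
    obtain ⟨z, rfl⟩ : ∃ z, mm = Sum.inl z := by
      refine hall mm ?_
      rw [Walk.support_cons]
      exact List.mem_cons_of_mem _ W.start_mem_support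
    have hadj : t₁.Adj x z := h
    obtain ⟨W', hs, he⟩ := ih rfl rfl (fun j hj => hall j (by
      rw [Walk.support_cons]; exact List.mem_cons_of_mem _ hj))
    refine ⟨Walk.cons hadj W', ?_, ?_⟩
    · rw [Walk.support_cons, Walk.support_cons, hs, List.map_cons]
    · rw [Walk.edges_cons, Walk.edges_cons, he, List.map_cons, Sym2.map_pair_eq]

lemma glue_projR : ∀ {m m' : T₁ ⊕ T₂} (W : (glueG t₁ t₂ a b).Walk m m') {x y : T₂},
    m = .inr x → m' = .inr y → (∀ j ∈ W.support, ∃ z, j = Sum.inr z) →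
    ∃ W' : t₂.Walk x y, W.support = W'.support.map Sum.inr ∧
      W.edges = W'.edges.map (Sym2.map Sum.inr) := by
  intro m m' W
  induction W with
  | nil =>
    rintro x y rfl h2 _
    obtain rfl : x = y := by injection h2
    exact ⟨Walk.nil, by simp, by simp⟩
  | @cons u mm w h W ih =>
    rintro x y rfl rfl hall
    obtain ⟨z, rfl⟩ : ∃ z, mm = Sum.inr z := by
      refine hall mm ?_
      rw [Walk.support_cons]
      exact List.mem_cons_of_mem _ W.start_mem_support
    have hadj : t₂.Adj x z := h
    obtain ⟨W', hs, he⟩ := ih rfl rfl (fun j hj => hall j (by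
      rw [Walk.support_cons]; exact List.mem_cons_of_mem _ hj))
    refine ⟨Walk.cons hadj W', ?_, ?_⟩
    · rw [Walk.support_cons, Walk.support_cons, hs, List.map_cons]
    · rw [Walk.edges_cons, Walk.edges_cons, he, List.map_cons, Sym2.map_pair_eq]

lemma glue_all_inl {x : T₁} {m : T₁ ⊕ T₂} (W : (glueG t₁ t₂ a b).Walk (.inl x) m)
    (hbr : bridge t₁ t₂ a b ∉ W.edges) : ∀ j ∈ W.support, ∃ z, j = Sum.inl z := by
  intro j hj
  have := glue_no_cross W hbr j hj
  cases j with
  | inl z => exact ⟨z, rfl⟩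
  | inr z => simp at this

lemma glue_all_inr {x : T₂} {m : T₁ ⊕ T₂} (W : (glueG t₁ t₂ a b).Walk (.inr x) m)
    (hbr : bridge t₁ t₂ a b ∉ W.edges) : ∀ j ∈ W.support, ∃ z, j = Sum.inr z := by
  intro j hj
  have := glue_no_cross W hbr j hj
  cases j with
  | inl z => simp at this
  | inr z => exact ⟨z, rfl⟩

/-- an `inl`-to-`inl` path avoids the bridge. -/
lemma glue_path_nobridge {x y : T₁} (p : (glueG t₁ t₂ a b).Walk (.inl x) (.inl y))
    (hp : p.IsPath) : bridge t₁ t₂ a b ∉ p.edges := by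
  classical
  intro hbr
  have hmem : (Sum.inr b : T₁ ⊕ T₂) ∈ p.support := p.snd_mem_support_of_mem_edges hbr
  have h1 : bridge t₁ t₂ a b ∈ (p.takeUntil _ hmem).edges :=
    glue_cross_lr _ rfl rfl
  have h2 : bridge t₁ t₂ a b ∈ (p.dropUntil _ hmem).edges :=
    glue_cross_rl _ rfl rfl
  have hnd := hp.isTrail.edges_nodup
  rw [← p.take_spec hmem, Walk.edges_append] at hnd
  exact List.disjoint_of_nodup_append hnd h1 h2

lemma glue_path_nobridge' {x y : T₂} (p : (glueG t₁ t₂ a b).Walk (.inr x) (.inr y))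
    (hp : p.IsPath) : bridge t₁ t₂ a b ∉ p.edges := by
  classical
  intro hbr
  have hmem : (Sum.inl a : T₁ ⊕ T₂) ∈ p.support := p.fst_mem_support_of_mem_edges hbr
  have h1 : bridge t₁ t₂ a b ∈ (p.takeUntil _ hmem).edges :=
    glue_cross_rl _ rfl rfl
  have h2 : bridge t₁ t₂ a b ∈ (p.dropUntil _ hmem).edges :=
    glue_cross_lr _ rfl rfl
  have hnd := hp.isTrail.edges_nodup
  rw [← p.take_spec hmem, Walk.edges_append] at hnd
  exact List.disjoint_of_nodup_append hnd h1 h2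

lemma glue_isTree (h₁ : t₁.IsTree) (h₂ : t₂.IsTree) : (glueG t₁ t₂ a b).IsTree := by
  classical
  constructor
  · -- connected
    have hL : ∀ x y : T₁, (glueG t₁ t₂ a b).Reachable (.inl x) (.inl y) := by
      intro x y
      exact Reachable.map (⟨Sum.inl, fun {u v} h => h⟩ : t₁ →g glueG t₁ t₂ a b)
        (h₁.isConnected.preconnected x y)
    have hR : ∀ x y : T₂, (glueG t₁ t₂ a b).Reachable (.inr x) (.inr y) := by
      intro x y
      exact Reachable.map (⟨Sum.inr, fun {u v} h => h⟩ : t₂ →g glueG t₁ t₂ a b)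
        (h₂.isConnected.preconnected x y)
    have hbr : (glueG t₁ t₂ a b).Reachable (.inl a) (.inr b) :=
      Adj.reachable (by simp)
    haveI : Nonempty (T₁ ⊕ T₂) := ⟨Sum.inl h₁.isConnected.nonempty.some⟩
    constructor
    rintro (x | x) (y | y)
    · exact hL x y
    · exact ((hL x a).trans hbr).trans (hR b y)
    · exact ((hR x b).trans hbr.symm).trans (hL a y)
    · exact hR x y
  · -- acyclic
    intro v c hc
    by_cases hbr : bridge t₁ t₂ a b ∈ c.edges
    · -- rotate the cycle to start at `inl a`
      have hmem : (Sum.inl a : T₁ ⊕ T₂) ∈ c.support := c.fst_mem_support_of_mem_edges hbr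
      have hc2 : (c.rotate _ hmem).IsCycle := hc.rotate hmem
      have hbr2 : bridge t₁ t₂ a b ∈ (c.rotate _ hmem).edges := by
        rwa [(c.rotate_edges _ hmem).mem_iff]
      set c2 := c.rotate _ hmem with hc2def
      clear_value c2
      cases c2 with
      | nil => exact hc2.ne_nil rfl
      | @cons _ mm _ h q =>
        rw [Walk.cons_isCycle_iff] at hc2
        cases mm with
        | inr z =>
          have hz : z = b := h.2
          subst hz
          exact hc2.2 (glue_cross_rl q rfl rfl)
        | inl z =>
          rw [Walk.edges_cons] at hbr2
          have hne : bridge t₁ t₂ a b ≠ s(Sum.inl a, Sum.inl z) := by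
            intro hcon
            rw [Sym2.eq, Sym2.rel_iff'] at hcon
            rcases hcon with ⟨_, h2⟩ | ⟨h1, _⟩ <;> simp_all
          have hbrq : bridge t₁ t₂ a b ∈ q.edges := by
            rcases List.mem_cons.mp hbr2 with hcon | hq
            · exact absurd hcon hne
            · exact hq
          have hmemq : (Sum.inr b : T₁ ⊕ T₂) ∈ q.support := q.snd_mem_support_of_mem_edges hbrq
          have h1 : bridge t₁ t₂ a b ∈ (q.takeUntil _ hmemq).edges :=
            glue_cross_lr _ rfl rfl
          have h2 : bridge t₁ t₂ a b ∈ (q.dropUntil _ hmemq).edges :=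
            glue_cross_rl _ rfl rfl
          have hnd := hc2.1.isTrail.edges_nodup
          rw [← q.take_spec hmemq, Walk.edges_append] at hnd
          exact List.disjoint_of_nodup_append hnd h1 h2
    · -- cycle avoiding the bridge stays on one side
      cases v with
      | inl v₁ =>
        obtain ⟨W', hs, he⟩ := glue_projL c rfl rfl (glue_all_inl c hbr)
        refine h₁.IsAcyclic W' ?_
        rw [Walk.isCycle_def] at hc ⊢
        refine ⟨?_, ?_, ?_⟩
        · rw [Walk.isTrail_def]
          have := hc.1.edges_nodup
          rw [he] at this
          exact this.of_map _
        · intro hnil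
          rw [hnil] at hs
          simp only [Walk.support_nil, List.map_cons, List.map_nil] at hs
          exact hc.2.1 (Walk.Nil.eq_nil (Walk.nil_iff_support_eq.mpr hs))
        · have := hc.2.2
          rw [hs, ← List.map_tail] at this
          exact this.of_map _
      | inr v₂ =>
        obtain ⟨W', hs, he⟩ := glue_projR c rfl rfl (glue_all_inr c hbr)
        refine h₂.IsAcyclic W' ?_
        rw [Walk.isCycle_def] at hc ⊢
        refine ⟨?_, ?_, ?_⟩
        · rw [Walk.isTrail_def]
          have := hc.1.edges_nodup
          rw [he] at this
          exact this.of_map _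
        · intro hnil
          rw [hnil] at hs
          simp only [Walk.support_nil, List.map_cons, List.map_nil] at hs
          exact hc.2.1 (Walk.Nil.eq_nil (Walk.nil_iff_support_eq.mpr hs))
        · have := hc.2.2
          rw [hs, ← List.map_tail] at this
          exact this.of_map _

/-- Decomposition of an `inl`-to-`inr` path in a glued graph. -/
lemma glue_path_decomp {x : T₁} {y : T₂} (p : (glueG t₁ t₂ a b).Walk (.inl x) (.inr y))
    (hp : p.IsPath) :
    ∃ (W₁ : t₁.Walk x a) (W₂ : t₂.Walk b y), W₁.IsPath ∧ W₂.IsPath ∧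
      ∀ j ∈ p.support, (∃ z, j = Sum.inl z ∧ z ∈ W₁.support) ∨
        (∃ z, j = Sum.inr z ∧ z ∈ W₂.support) := by
  classical
  have hbr : bridge t₁ t₂ a b ∈ p.edges := glue_cross_lr p rfl rfl
  have hmem : (Sum.inl a : T₁ ⊕ T₂) ∈ p.support := p.fst_mem_support_of_mem_edges hbr
  set q₁ := p.takeUntil _ hmem with hq₁
  have hq₁p : q₁.IsPath := hp.takeUntil hmem
  have hq₁nb : bridge t₁ t₂ a b ∉ q₁.edges := glue_path_nobridge q₁ hq₁p
  obtain ⟨W₁, hW₁s, hW₁e⟩ := glue_projL q₁ rfl rfl (glue_all_inl q₁ hq₁nb)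
  have hW₁path : W₁.IsPath := by
    rw [Walk.isPath_def]
    have := hq₁p.support_nodup
    rw [hW₁s] at this
    exact this.of_map _
  set r := p.dropUntil _ hmem with hr
  have hrp : r.IsPath := hp.dropUntil hmem
  have hsupp : p.support = q₁.support ++ r.support.tail := by
    rw [hq₁, hr, ← Walk.support_append, p.take_spec hmem]
  clear_value r
  cases r with
  | @cons _ mm _ h w =>
    have hwp : w.IsPath := hrp.of_cons
    obtain ⟨z, rfl⟩ : ∃ z, mm = Sum.inr z := by
      cases mm with
      | inr z => exact ⟨z, rfl⟩
      | inl z =>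
        exfalso
        have hbrw : bridge t₁ t₂ a b ∈ w.edges := glue_cross_lr w rfl rfl
        have : (Sum.inl a : T₁ ⊕ T₂) ∈ w.support := w.fst_mem_support_of_mem_edges hbrw
        have hnd := hrp.support_nodup
        rw [Walk.support_cons] at hnd
        exact (List.nodup_cons.mp hnd).1 this
    have hz : z = b := h.2
    subst hz
    have hwnb := glue_path_nobridge' w hwp
    obtain ⟨W₂, hW₂s, hW₂e⟩ := glue_projR w rfl rfl (glue_all_inr w hwnb)
    have hW₂path : W₂.IsPath := by
      rw [Walk.isPath_def]
      have := hwp.support_nodup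
      rw [hW₂s] at this
      exact this.of_map _
    refine ⟨W₁, W₂, hW₁path, hW₂path, ?_⟩
    intro j hj
    rw [hsupp, List.mem_append] at hj
    rcases hj with hj | hj
    · rw [hW₁s, List.mem_map] at hj
      obtain ⟨z, hz1, rfl⟩ := hj
      exact Or.inl ⟨z, rfl, hz1⟩
    · rw [Walk.support_cons, List.tail_cons, hW₂s, List.mem_map] at hj
      obtain ⟨z, hz1, rfl⟩ := hj
      exact Or.inr ⟨z, rfl, hz1⟩

end

section

open SimpleGraph Walk

variable {V : Type}

/-- A tree decomposition of the part of `h` inside `s`, with all bags cliques. -/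
structure RelTD (h : SimpleGraph V) (s : Set V) (d : TreeDecomp V) : Prop where
  bag_sub : ∀ i, d.β i ⊆ s
  cover : ∀ v ∈ s, ∃ i, v ∈ d.β i
  edge : ∀ u v, u ∈ s → v ∈ s → h.Adj u v → ∃ i, u ∈ d.β i ∧ v ∈ d.β i
  conn : ∀ (i j k : d.T) (p : d.tree.Walk i k), p.IsPath → j ∈ p.support →
    d.β i ∩ d.β k ⊆ d.β j
  clique : ∀ i, h.IsClique (d.β i)

lemma unit_isTree : (⊥ : SimpleGraph Unit).IsTree := by
  constructor
  · constructor
    intro u v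
    cases u; cases v
    exact Reachable.refl _
  · intro v c hc
    exact hc.ne_bot rfl

/-- The one-bag tree decomposition. -/
def unitTD (s : Set V) : TreeDecomp V :=
  ⟨Unit, inferInstance, ⊥, unit_isTree, fun _ => s⟩

lemma unitTD_relTD {h : SimpleGraph V} {s : Set V} (hclq : h.IsClique s) :
    RelTD h s (unitTD s) := by
  refine ⟨fun i => le_refl s, fun v hv => ⟨(), hv⟩, fun u v hu hv _ => ⟨(), hu, hv⟩,
    fun i j k p hp hj x hx => hx.1, fun i => hclq⟩

section Glue

variable {T₁ T₂ : Type} {t₁ : SimpleGraph T₁} {t₂ : SimpleGraph T₂} {n₁ : T₁} {n₂ : T₂}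

lemma glue_conn_ll (β₁ : T₁ → Set V)
    (hconn₁ : ∀ (i j k : T₁) (p : t₁.Walk i k), p.IsPath → j ∈ p.support →
      β₁ i ∩ β₁ k ⊆ β₁ j)
    {i₁ k₁ : T₁} (p : (glueG t₁ t₂ n₁ n₂).Walk (.inl i₁) (.inl k₁)) (hp : p.IsPath)
    {j : T₁ ⊕ T₂} (hj : j ∈ p.support) {x : V} (hxi : x ∈ β₁ i₁) (hxk : x ∈ β₁ k₁) :
    ∃ j₁, j = Sum.inl j₁ ∧ x ∈ β₁ j₁ := by
  have hnb := glue_path_nobridge p hp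
  obtain ⟨W', hs, _⟩ := glue_projL p rfl rfl (glue_all_inl p hnb)
  have hW'path : W'.IsPath := by
    rw [Walk.isPath_def]
    have := hp.support_nodup
    rw [hs] at this
    exact this.of_map _
  rw [hs, List.mem_map] at hj
  obtain ⟨j₁, hj₁, rfl⟩ := hj
  exact ⟨j₁, rfl, hconn₁ i₁ j₁ k₁ W' hW'path hj₁ ⟨hxi, hxk⟩⟩

lemma glue_conn_rr (β₂ : T₂ → Set V)
    (hconn₂ : ∀ (i j k : T₂) (p : t₂.Walk i k), p.IsPath → j ∈ p.support →
      β₂ i ∩ β₂ k ⊆ β₂ j)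
    {i₂ k₂ : T₂} (p : (glueG t₁ t₂ n₁ n₂).Walk (.inr i₂) (.inr k₂)) (hp : p.IsPath)
    {j : T₁ ⊕ T₂} (hj : j ∈ p.support) {x : V} (hxi : x ∈ β₂ i₂) (hxk : x ∈ β₂ k₂) :
    ∃ j₂, j = Sum.inr j₂ ∧ x ∈ β₂ j₂ := by
  have hnb := glue_path_nobridge' p hp
  obtain ⟨W', hs, _⟩ := glue_projR p rfl rfl (glue_all_inr p hnb)
  have hW'path : W'.IsPath := by
    rw [Walk.isPath_def]
    have := hp.support_nodup
    rw [hs] at this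
    exact this.of_map _
  rw [hs, List.mem_map] at hj
  obtain ⟨j₂, hj₂, rfl⟩ := hj
  exact ⟨j₂, rfl, hconn₂ i₂ j₂ k₂ W' hW'path hj₂ ⟨hxi, hxk⟩⟩

lemma glue_conn_lr (β₁ : T₁ → Set V) (β₂ : T₂ → Set V)
    (hconn₁ : ∀ (i j k : T₁) (p : t₁.Walk i k), p.IsPath → j ∈ p.support →
      β₁ i ∩ β₁ k ⊆ β₁ j)
    (hconn₂ : ∀ (i j k : T₂) (p : t₂.Walk i k), p.IsPath → j ∈ p.support →
      β₂ i ∩ β₂ k ⊆ β₂ j)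
    {i₁ : T₁} {k₂ : T₂} (p : (glueG t₁ t₂ n₁ n₂).Walk (.inl i₁) (.inr k₂)) (hp : p.IsPath)
    {j : T₁ ⊕ T₂} (hj : j ∈ p.support) {x : V} (hxi : x ∈ β₁ i₁) (hxk : x ∈ β₂ k₂)
    (hxn₁ : x ∈ β₁ n₁) (hxn₂ : x ∈ β₂ n₂) :
    (∃ j₁, j = Sum.inl j₁ ∧ x ∈ β₁ j₁) ∨ (∃ j₂, j = Sum.inr j₂ ∧ x ∈ β₂ j₂) := by
  obtain ⟨W₁, W₂, hW₁p, hW₂p, hcov⟩ := glue_path_decomp p hp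
  rcases hcov j hj with ⟨z, rfl, hz⟩ | ⟨z, rfl, hz⟩
  · exact Or.inl ⟨z, rfl, hconn₁ i₁ z n₁ W₁ hW₁p hz ⟨hxi, hxn₁⟩⟩
  · exact Or.inr ⟨z, rfl, hconn₂ n₂ z k₂ W₂ hW₂p hz ⟨hxn₂, hxk⟩⟩

end Glue

/-- Glue two relative tree decompositions along a common separator contained in
designated bags. -/
lemma glue_relTD {h : SimpleGraph V} {s₁ s₂ S : Set V} {d₁ d₂ : TreeDecomp V}
    (r₁ : RelTD h s₁ d₁) (r₂ : RelTD h s₂ d₂) {n₁ : d₁.T} {n₂ : d₂.T}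
    (hn₁ : S ⊆ d₁.β n₁) (hn₂ : S ⊆ d₂.β n₂) (hint : s₁ ∩ s₂ ⊆ S)
    (hcross : ∀ u v, h.Adj u v → u ∈ s₁ ∪ s₂ → v ∈ s₁ ∪ s₂ →
      (u ∈ s₁ ∧ v ∈ s₁) ∨ (u ∈ s₂ ∧ v ∈ s₂)) :
    ∃ d : TreeDecomp V, RelTD h (s₁ ∪ s₂) d := by
  haveI := d₁.tFinite
  haveI := d₂.tFinite
  refine ⟨⟨d₁.T ⊕ d₂.T, inferInstance, glueG d₁.tree d₂.tree n₁ n₂,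
    glue_isTree d₁.isTree d₂.isTree, Sum.elim d₁.β d₂.β⟩, ?_, ?_, ?_, ?_, ?_⟩
  · rintro (i | i) x hx
    · exact Or.inl (r₁.bag_sub i hx)
    · exact Or.inr (r₂.bag_sub i hx)
  · rintro v (hv | hv)
    · obtain ⟨i, hi⟩ := r₁.cover v hv
      exact ⟨Sum.inl i, hi⟩
    · obtain ⟨i, hi⟩ := r₂.cover v hv
      exact ⟨Sum.inr i, hi⟩
  · intro u v hu hv hadj
    rcases hcross u v hadj hu hv with ⟨hu1, hv1⟩ | ⟨hu2, hv2⟩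
    · obtain ⟨i, hi⟩ := r₁.edge u v hu1 hv1 hadj
      exact ⟨Sum.inl i, hi⟩
    · obtain ⟨i, hi⟩ := r₂.edge u v hu2 hv2 hadj
      exact ⟨Sum.inr i, hi⟩
  · rintro (i₁ | i₂) j (k₁ | k₂) p hp hj x hx
    · obtain ⟨j₁, rfl, hmem⟩ := glue_conn_ll d₁.β r₁.conn p hp hj hx.1 hx.2
      exact hmem
    · have hxS : x ∈ S := hint ⟨r₁.bag_sub _ hx.1, r₂.bag_sub _ hx.2⟩
      rcases glue_conn_lr d₁.β d₂.β r₁.conn r₂.conn p hp hj hx.1 hx.2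
          (hn₁ hxS) (hn₂ hxS) with ⟨j₁, rfl, hmem⟩ | ⟨j₂, rfl, hmem⟩
      · exact hmem
      · exact hmem
    · have hxS : x ∈ S := hint ⟨r₁.bag_sub _ hx.2, r₂.bag_sub _ hx.1⟩
      have hj' : j ∈ p.reverse.support := by
        rwa [Walk.support_reverse, List.mem_reverse]
      rcases glue_conn_lr d₁.β d₂.β r₁.conn r₂.conn p.reverse hp.reverse hj' hx.2 hx.1
          (hn₁ hxS) (hn₂ hxS) with ⟨j₁, rfl, hmem⟩ | ⟨j₂, rfl, hmem⟩
      · exact hmem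
      · exact hmem
    · obtain ⟨j₂, rfl, hmem⟩ := glue_conn_rr d₂.β r₂.conn p hp hj hx.1 hx.2
      exact hmem
  · rintro (i | i)
    · exact r₁.clique i
    · exact r₂.clique i

/-- Every chordal graph has (relative to any vertex set) a tree decomposition with
clique bags. -/
lemma cliqueTD_exists [Fintype V] {G : SimpleGraph V} (hch : IsChordal G) (s : Set V) :
    ∃ d : TreeDecomp V, RelTD G s d := by
  classical
  suffices H : ∀ (n : ℕ) (s : Set V), s.ncard ≤ n → ∃ d : TreeDecomp V, RelTD G s d by
    exact H s.ncard s le_rfl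
  intro n
  induction n using Nat.strong_induction_on with
  | _ n ih =>
    intro s hsn
    by_cases hclq : G.IsClique s
    · exact ⟨unitTD s, unitTD_relTD hclq⟩
    · rw [SimpleGraph.isClique_iff, Set.Pairwise] at hclq
      push_neg at hclq
      obtain ⟨a, ha, b, hb, hab, hnadj⟩ := hclq
      obtain ⟨S, hS, hmin⟩ := sepIn_min_exists ha hb hab hnadj
      set A : Set V := {j | ReachIn G (s \ S) a j} with hA
      have haA : a ∈ A := ReachIn.refl ⟨ha, hS.2.1⟩
      have hbA : b ∉ A := fun hcon => hS.2.2.2 hcon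
      have hA_sub : A ⊆ s \ S := fun j hj => hj.mem_right
      set s₁ : Set V := A ∪ S with hs₁def
      set s₂ : Set V := s \ A with hs₂def
      have hs₁s : s₁ ⊆ s := by
        rintro j (hj | hj)
        · exact (hA_sub hj).1
        · exact hS.1 hj
      have hs₂s : s₂ ⊆ s := Set.diff_subset
      have hbs₁ : b ∉ s₁ := by
        rintro (hj | hj)
        · exact hbA hj
        · exact hS.2.2.1 hj
      have has₂ : a ∉ s₂ := fun hcon => hcon.2 haA
      have hcard₁ : s₁.ncard < n := by
        have : s₁.ncard < s.ncard :=
          Set.ncard_lt_ncard ⟨hs₁s, fun hcon => hbs₁ (hcon hb)⟩ (Set.toFinite s)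
        omega
      have hcard₂ : s₂.ncard < n := by
        have : s₂.ncard < s.ncard :=
          Set.ncard_lt_ncard ⟨hs₂s, fun hcon => has₂ (hcon ha)⟩ (Set.toFinite s)
        omega
      obtain ⟨d₁, r₁⟩ := ih s₁.ncard hcard₁ s₁ le_rfl
      obtain ⟨d₂, r₂⟩ := ih s₂.ncard hcard₂ s₂ le_rfl
      have hSclq : ∀ x ∈ S, ∀ y ∈ S, x ≠ y → G.Adj x y :=
        fun x hx y hy hxy => sep_clique hch hS hmin hx hy hxy
      have hSs₁ : S ⊆ s₁ := Set.subset_union_right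
      have hSs₂ : S ⊆ s₂ := by
        intro x hx
        exact ⟨hS.1 hx, fun hcon => (hA_sub hcon).2 hx⟩
      -- find bags containing S on both sides
      have hhelly : ∀ (d : TreeDecomp V) (sd : Set V), RelTD G sd d → S ⊆ sd →
          ∃ nd, S ⊆ d.β nd := by
        intro d sd r hSsd
        obtain ⟨nd, hnd⟩ := helly d r.conn (S.toFinite.toFinset)
          (fun v hv => r.cover v (hSsd ((Set.Finite.mem_toFinset _).mp hv)))
          (fun u v hu hv hne => by
            have hu' := (Set.Finite.mem_toFinset _).mp hu
            have hv' := (Set.Finite.mem_toFinset _).mp hv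
            exact r.edge u v (hSsd hu') (hSsd hv') (hSclq u hu' v hv' hne))
        exact ⟨nd, fun x hx => hnd x ((Set.Finite.mem_toFinset _).mpr hx)⟩
      obtain ⟨n₁, hn₁⟩ := hhelly d₁ s₁ r₁ hSs₁
      obtain ⟨n₂, hn₂⟩ := hhelly d₂ s₂ r₂ hSs₂
      have hint : s₁ ∩ s₂ ⊆ S := by
        rintro j ⟨hj1 | hj1, hj2⟩
        · exact absurd hj1 hj2.2
        · exact hj1
      have hcross : ∀ u v, G.Adj u v → u ∈ s₁ ∪ s₂ → v ∈ s₁ ∪ s₂ →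
          (u ∈ s₁ ∧ v ∈ s₁) ∨ (u ∈ s₂ ∧ v ∈ s₂) := by
        intro u v hadj hu hv
        have hus : u ∈ s := by rcases hu with h | h; exacts [hs₁s h, hs₂s h]
        have hvs : v ∈ s := by rcases hv with h | h; exacts [hs₁s h, hs₂s h]
        by_cases huA : u ∈ A
        · by_cases hvA : v ∈ A
          · exact Or.inl ⟨Or.inl huA, Or.inl hvA⟩
          · -- v adjacent to A, so v ∈ S (or v ∈ A, excluded)
            have hvS : v ∈ S := by
              by_contra hvS
              exact hvA (ReachIn.trans huA (ReachIn.adj hadj huA.mem_right ⟨hvs, hvS⟩))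
            exact Or.inl ⟨Or.inl huA, Or.inr hvS⟩
        · by_cases hvA : v ∈ A
          · have huS : u ∈ S := by
              by_contra huS
              exact huA (ReachIn.trans hvA (ReachIn.adj hadj.symm hvA.mem_right ⟨hus, huS⟩))
            exact Or.inl ⟨Or.inr huS, Or.inl hvA⟩
          · exact Or.inr ⟨⟨hus, huA⟩, ⟨hvs, hvA⟩⟩
      have hunion : s₁ ∪ s₂ = s := by
        apply Set.eq_of_subset_of_subset
        · rintro j (hj | hj); exacts [hs₁s hj, hs₂s hj]
        · intro j hj
          by_cases hjA : j ∈ A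
          · exact Or.inl (Or.inl hjA)
          · exact Or.inr ⟨hj, hjA⟩
      obtain ⟨d, hd⟩ := glue_relTD r₁ r₂ hn₁ hn₂ hint hcross
      rw [hunion] at hd
      exact ⟨d, hd⟩

end

section

open SimpleGraph Walk

variable {V : Type} {G : SimpleGraph V}

lemma IsPath.getVert_inj : ∀ {u v : V} (p : G.Walk u v), p.IsPath → ∀ {i j : ℕ},
    i ≤ p.length → j ≤ p.length → p.getVert i = p.getVert j → i = j := by
  intro u v p
  induction p with
  | nil => intro _ i j hi hj _; simp only [Walk.length_nil, Nat.le_zero] at hi hj; omega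
  | @cons a b c h q ih =>
    intro hp i j hi hj hij
    rw [Walk.cons_isPath_iff] at hp
    match i, j with
    | 0, 0 => rfl
    | 0, j + 1 =>
      exfalso
      rw [Walk.getVert_zero, Walk.getVert_cons_succ] at hij
      exact hp.2 (Walk.mem_support_iff_exists_getVert.mpr ⟨j, hij.symm, by
        simpa [Walk.length_cons] using hj⟩)
    | i + 1, 0 =>
      exfalso
      rw [Walk.getVert_zero, Walk.getVert_cons_succ] at hij
      exact hp.2 (Walk.mem_support_iff_exists_getVert.mpr ⟨i, hij, by
        simpa [Walk.length_cons] using hi⟩)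
    | i + 1, j + 1 =>
      rw [Walk.getVert_cons_succ, Walk.getVert_cons_succ] at hij
      have := ih hp.1 (by simpa [Walk.length_cons] using hi)
        (by simpa [Walk.length_cons] using hj) hij
      omega

lemma IsCycle.getVert_inj {v : V} (c : G.Walk v v) (hc : c.IsCycle) {i j : ℕ}
    (hi : i < c.length) (hj : j < c.length) (hij : c.getVert i = c.getVert j) : i = j := by
  cases c with
  | nil => simp at hi
  | @cons _ b _ h q =>
    have hq : q.IsPath := by
      rw [Walk.isCycle_def] at hc
      rw [Walk.isPath_def]
      have := hc.2.2
      rwa [Walk.support_cons, List.tail_cons] at this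
    rw [Walk.length_cons] at hi hj
    match i, j with
    | 0, 0 => rfl
    | 0, j + 1 =>
      exfalso
      rw [Walk.getVert_zero, Walk.getVert_cons_succ] at hij
      have : q.getVert j = q.getVert q.length := by
        rw [q.getVert_length, ← hij]
      have := IsPath.getVert_inj q hq (by omega) le_rfl this
      omega
    | i + 1, 0 =>
      exfalso
      rw [Walk.getVert_zero, Walk.getVert_cons_succ] at hij
      have : q.getVert i = q.getVert q.length := by
        rw [q.getVert_length, hij]
      have := IsPath.getVert_inj q hq (by omega) le_rfl this
      omega
    | i + 1, j + 1 =>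
      rw [Walk.getVert_cons_succ, Walk.getVert_cons_succ] at hij
      have := IsPath.getVert_inj q hq (i := i) (j := j) (by omega) (by omega) hij
      omega

/-- A graph admitting a tree decomposition with clique bags is chordal. -/
lemma chordal_of_cliqueTD {H : SimpleGraph V} (d : TreeDecomp V)
    (hcov : ∀ u v, H.Adj u v → ∃ i, u ∈ d.β i ∧ v ∈ d.β i)
    (hconn : ∀ (i j k : d.T) (p : d.tree.Walk i k), p.IsPath → j ∈ p.support →
      d.β i ∩ d.β k ⊆ d.β j)
    (hclq : ∀ i, H.IsClique (d.β i)) :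
    IsChordal H := by
  classical
  haveI : Finite d.T := d.tFinite
  intro v c hcyc hlen
  by_contra hno
  push_neg at hno
  set k := c.length with hk
  set x : ℕ → V := c.getVert with hxdef
  have hk4 : 4 ≤ k := by omega
  have hxk0 : x k = x 0 := by
    rw [hxdef]
    rw [show c.getVert k = v from c.getVert_length, c.getVert_zero]
  have hxsup : ∀ i, x i ∈ c.support :=
    fun i => Walk.mem_support_iff_exists_getVert.mpr
      ⟨min i k, by
        rcases le_or_gt i k with h | h
        · simp [min_eq_left h, hxdef]
        · rw [min_eq_right h.le, hxdef]
          exact (c.getVert_of_length_le le_rfl).trans (c.getVert_of_length_le h.le).symm,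
        min_le_right _ _⟩
  have hinj : ∀ i j, i < k → j < k → x i = x j → i = j :=
    fun i j hi hj hij => IsCycle.getVert_inj c hcyc hi hj hij
  -- no two vertices at cyclic distance ≥ 2 share a bag
  have noshare : ∀ i j, i < j → j < k → i + 2 ≤ j → ¬(i = 0 ∧ j = k - 1) →
      ∀ t, x i ∈ d.β t → x j ∈ d.β t → False := by
    intro i j hij hjk h2 hnotend t hit hjt
    have hne : x i ≠ x j := fun hcon => by
      have := hinj i j (by omega) hjk hcon
      omega
    have hadj : H.Adj (x i) (x j) := hclq t hit hjt hne
    have hedge := hno (x i) (x j) (hxsup i) (hxsup j) hadj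
    obtain ⟨l, hl, heq⟩ := edge_getVert c hedge
    have hmi : x i = x l ∨ x i = x (l + 1) := by
      have : x i ∈ s(x l, x (l + 1)) := heq ▸ Sym2.mem_mk_left _ _
      simpa using this
    have hmj : x j = x l ∨ x j = x (l + 1) := by
      have : x j ∈ s(x l, x (l + 1)) := heq ▸ Sym2.mem_mk_right _ _
      simpa using this
    have hsucc : ∀ m, m < k → x m = x (l + 1) → (l + 1 < k ∧ m = l + 1) ∨
        (l + 1 = k ∧ m = 0) := by
      intro m hm hxm
      rcases Nat.lt_or_ge (l + 1) k with hl1 | hl1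
      · exact Or.inl ⟨hl1, hinj m (l + 1) hm hl1 hxm⟩
      · have hlk : l + 1 = k := by omega
        refine Or.inr ⟨hlk, hinj m 0 hm (by omega) ?_⟩
        rw [hxm, hlk, hxk0]
    rcases hmi with h1 | h1 <;> rcases hmj with h2 | h2
    · have := hinj i l (by omega) hl h1
      have := hinj j l hjk hl h2
      omega
    · have := hinj i l (by omega) hl h1
      rcases hsucc j hjk h2 with ⟨_, _⟩ | ⟨_, _⟩ <;> omega
    · have := hinj j l hjk hl h2
      rcases hsucc i (by omega) h1 with ⟨_, _⟩ | ⟨_, _⟩ <;> omega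
    · have := hinj i j (by omega) hjk (h1.trans h2.symm)
      omega
  -- pick bag nodes for consecutive pairs
  have hnnex : ∀ i : ℕ, ∃ t : d.T, i < k → x i ∈ d.β t ∧ x (i + 1) ∈ d.β t := by
    intro i
    rcases Nat.lt_or_ge i k with hi | hi
    · obtain ⟨t, ht1, ht2⟩ := hcov (x i) (x (i + 1)) (c.adj_getVert_succ hi)
      exact ⟨t, fun _ => ⟨ht1, ht2⟩⟩
    · obtain ⟨t⟩ := d.isTree.isConnected.nonempty
      exact ⟨t, fun hcon => absurd hcon (by omega)⟩
  choose nn hnn using hnnex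
  -- the chain of paths around the far side of the cycle
  have chain : ∀ r m, 1 ≤ m → m + r = k - 1 → ∃ W : d.tree.Walk (nn m) (nn 0),
      (∀ jj ∈ W.support, ∃ i, m + 1 ≤ i ∧ i ≤ k ∧ x i ∈ d.β jj) ∧
      (∀ e ∈ W.edges, ∃ i, m + 1 ≤ i ∧ i ≤ k ∧ ∀ t ∈ e, x i ∈ d.β t) := by
    intro r
    induction r with
    | zero =>
      intro m hm1 hmr
      have hmk : m = k - 1 := by omega
      obtain ⟨w0⟩ := d.isTree.isConnected.preconnected (nn m) (nn 0)
      refine ⟨w0.toPath, ?_, ?_⟩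
      · intro jj hjj
        refine ⟨k, by omega, le_rfl, ?_⟩
        refine hconn (nn m) jj (nn 0) w0.toPath w0.toPath.2 hjj ⟨?_, ?_⟩
        · have := (hnn m (by omega)).2
          rwa [show m + 1 = k by omega] at this
        · rw [hxk0]
          exact (hnn 0 (by omega)).1
      · intro e he
        refine ⟨k, by omega, le_rfl, fun t htmem => ?_⟩
        have hts : t ∈ (w0.toPath : d.tree.Walk (nn m) (nn 0)).support := by
          induction e with
          | h z z' =>
            rcases Sym2.mem_iff.mp htmem with rfl | rfl
            · exact Walk.fst_mem_support_of_mem_edges _ he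
            · exact Walk.snd_mem_support_of_mem_edges _ he
        refine hconn (nn m) t (nn 0) w0.toPath w0.toPath.2 hts ⟨?_, ?_⟩
        · have := (hnn m (by omega)).2
          rwa [show m + 1 = k by omega] at this
        · rw [hxk0]
          exact (hnn 0 (by omega)).1
    | succ r ihr =>
      intro m hm1 hmr
      obtain ⟨W', hW's, hW'e⟩ := ihr (m + 1) (by omega) (by omega)
      obtain ⟨w0⟩ := d.isTree.isConnected.preconnected (nn m) (nn (m + 1))
      have hm1k : m + 1 < k := by omega
      have hseg : ∀ jj ∈ (w0.toPath : d.tree.Walk (nn m) (nn (m+1))).support,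
          x (m + 1) ∈ d.β jj := by
        intro jj hjj
        refine hconn (nn m) jj (nn (m + 1)) w0.toPath w0.toPath.2 hjj
          ⟨(hnn m (by omega)).2, (hnn (m + 1) hm1k).1⟩
      refine ⟨(w0.toPath : d.tree.Walk (nn m) (nn (m+1))).append W', ?_, ?_⟩
      · intro jj hjj
        rw [Walk.mem_support_append_iff] at hjj
        rcases hjj with hjj | hjj
        · exact ⟨m + 1, le_rfl, by omega, hseg jj hjj⟩
        · obtain ⟨i, hi1, hi2, hi3⟩ := hW's jj hjj
          exact ⟨i, by omega, hi2, hi3⟩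
      · intro e he
        rw [Walk.edges_append, List.mem_append] at he
        rcases he with he | he
        · refine ⟨m + 1, le_rfl, by omega, fun t htmem => ?_⟩
          have hts : t ∈ (w0.toPath : d.tree.Walk (nn m) (nn (m+1))).support := by
            induction e with
            | h z z' =>
              rcases Sym2.mem_iff.mp htmem with rfl | rfl
              · exact Walk.fst_mem_support_of_mem_edges _ he
              · exact Walk.snd_mem_support_of_mem_edges _ he
          exact hseg t hts
        · obtain ⟨i, hi1, hi2, hi3⟩ := hW'e e he
          exact ⟨i, by omega, hi2, hi3⟩
  obtain ⟨W, hWs, hWe⟩ := chain (k - 2) 1 le_rfl (by omega)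
  obtain ⟨P, hPpath, hPsubW⟩ : ∃ P : d.tree.Walk (nn 1) (nn 0), P.IsPath ∧
      ∀ jj ∈ P.support, jj ∈ W.support :=
    ⟨W.toPath, W.toPath.2, fun jj hjj => W.support_toPath_subset hjj⟩
  have hPS1 : ∀ jj ∈ P.support, x 1 ∈ d.β jj := by
    intro jj hjj
    exact hconn (nn 1) jj (nn 0) P hPpath hjj ⟨(hnn 1 (by omega)).1, (hnn 0 (by omega)).2⟩
  have hS0S2 : ∀ t, x 0 ∈ d.β t → x 2 ∈ d.β t → False := by
    intro t h0 h2
    exact noshare 0 2 (by omega) (by omega) (by omega) (by omega) t h0 h2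
  have hPS02 : ∀ jj ∈ P.support, x 0 ∈ d.β jj ∨ x 2 ∈ d.β jj := by
    intro jj hjj
    obtain ⟨i, hi1, hi2, hi3⟩ := hWs jj (hPsubW jj hjj)
    rcases Nat.lt_or_ge i k with hik | hik
    · rcases Nat.lt_or_ge i 3 with hi3' | hi3'
      · have : i = 2 := by omega
        subst this
        exact Or.inr hi3
      · exfalso
        exact noshare 1 i (by omega) hik (by omega) (by omega) jj (hPS1 jj hjj) hi3
    · have hik' : i = k := by omega
      subst hik'
      rw [hxk0] at hi3
      exact Or.inl hi3
  -- find the crossing edge of P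
  have hstart : x 2 ∈ d.β (nn 1) := (hnn 1 (by omega)).2
  have hendP : ¬ x 2 ∈ d.β (nn 0) := by
    intro hcon
    exact hS0S2 (nn 0) (hnn 0 (by omega)).1 hcon
  obtain ⟨z, z', hzz'e, hz2, hz'2⟩ := cross_edge P {t | x 2 ∈ d.β t} hstart hendP
  have hzP : z ∈ P.support := Walk.fst_mem_support_of_mem_edges _ hzz'e
  have hz'P : z' ∈ P.support := Walk.snd_mem_support_of_mem_edges _ hzz'e
  have hz'0 : x 0 ∈ d.β z' := (hPS02 z' hz'P).resolve_right hz'2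
  have hz1 : x 1 ∈ d.β z := hPS1 z hzP
  have hz'1 : x 1 ∈ d.β z' := hPS1 z' hz'P
  -- the edge z-z' is a bridge of the tree
  have hzz'adj : d.tree.Adj z z' := P.adj_of_mem_edges hzz'e
  have hbridge := (isAcyclic_iff_forall_edge_isBridge.mp d.isTree.IsAcyclic)
    (e := s(z, z')) (by rwa [SimpleGraph.mem_edgeSet])
  have hforced := (isBridge_iff_adj_and_forall_walk_mem_edges.mp hbridge)
  -- the chain W must contain the edge s(z,z')
  have hWedge : s(z, z') ∈ W.edges := by
    by_contra hWe'
    -- build a walk from z to z' avoiding the edge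
    obtain ⟨w₁⟩ := d.isTree.isConnected.preconnected z (nn 1)
    obtain ⟨w₂⟩ := d.isTree.isConnected.preconnected (nn 0) z'
    have hw₁sup : ∀ jj ∈ (w₁.toPath : d.tree.Walk z (nn 1)).support, x 2 ∈ d.β jj := by
      intro jj hjj
      exact hconn z jj (nn 1) w₁.toPath w₁.toPath.2 hjj ⟨hz2, hstart⟩
    have hw₂sup : ∀ jj ∈ (w₂.toPath : d.tree.Walk (nn 0) z').support, x 0 ∈ d.β jj := by
      intro jj hjj
      exact hconn (nn 0) jj z' w₂.toPath w₂.toPath.2 hjj ⟨(hnn 0 (by omega)).1, hz'0⟩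
    have hmem := hforced (((w₁.toPath : d.tree.Walk z (nn 1)).append W).append
      (w₂.toPath : d.tree.Walk (nn 0) z'))
    rw [Walk.edges_append, Walk.edges_append, List.mem_append, List.mem_append] at hmem
    rcases hmem with (hmem | hmem) | hmem
    · -- edge inside w₁ : z' would have x 2 in its bag
      have : z' ∈ (w₁.toPath : d.tree.Walk z (nn 1)).support :=
        Walk.snd_mem_support_of_mem_edges _ hmem
      exact hz'2 (hw₁sup z' this)
    · exact hWe' hmem
    · -- edge inside w₂ : z would have x 0 in its bag
      have : z ∈ (w₂.toPath : d.tree.Walk (nn 0) z').support :=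
        Walk.fst_mem_support_of_mem_edges _ hmem
      exact hS0S2 z (hw₂sup z this) hz2
  -- but each edge of W lies in some S i with 2 ≤ i ≤ k, contradiction
  obtain ⟨i, hi1, hi2, hi3⟩ := hWe _ hWedge
  have hzi : x i ∈ d.β z := hi3 z (Sym2.mem_mk_left _ _)
  have hz'i : x i ∈ d.β z' := hi3 z' (Sym2.mem_mk_right _ _)
  rcases Nat.lt_or_ge i k with hik | hik
  · rcases Nat.lt_or_ge i 3 with hi3' | hi3'
    · have : i = 2 := by omega
      subst this
      exact hz'2 hz'i
    · exact noshare 1 i (by omega) hik (by omega) (by omega) z hz1 hzi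
  · have hik' : i = k := by omega
    subst hik'
    rw [hxk0] at hzi
    exact hS0S2 z hzi hz2

end

section

open SimpleGraph Walk

theorem proper_td_of_minTri' {V : Type} [Fintype V] (g h : SimpleGraph V)
    (hh : h ∈ MinTri g) (d : TreeDecomp V) (hd : IsProperTD h d) :
    IsProperTD g d ∧ saturate g d = h := by
  classical
  obtain ⟨hgh, hch, hmin⟩ := hh
  obtain ⟨⟨hcov1, hcov2, hconn⟩, hproper⟩ := hd
  -- Step 1: every bag of d is a clique of h
  obtain ⟨d', r'⟩ := cliqueTD_exists hch Set.univ
  have hTD' : IsTD h d' :=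
    ⟨fun v => r'.cover v trivial, fun u v huv => r'.edge u v trivial trivial huv, r'.conn⟩
  have hsub : Subsumes d' d := by
    rintro b ⟨i, rfl⟩
    have hbclq : h.IsClique (d'.β i) := r'.clique i
    obtain ⟨t, ht⟩ := helly d hconn ((d'.β i).toFinite.toFinset)
      (fun v hv => hcov1 v)
      (fun u v hu hv hne => hcov2 u v (hbclq ((Set.Finite.mem_toFinset _).mp hu)
        ((Set.Finite.mem_toFinset _).mp hv) hne))
    exact ⟨d.β t, ⟨t, rfl⟩, fun v hv => ht v ((Set.Finite.mem_toFinset _).mpr hv)⟩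
  have hbags : d.bags ⊆ d'.bags := by
    by_contra hcon
    exact hproper d' hTD' ⟨hsub, hcon⟩
  have hbagsclq : ∀ i, h.IsClique (d.β i) := by
    intro i
    obtain ⟨i', hi'⟩ := hbags ⟨i, rfl⟩
    rw [← hi']
    exact r'.clique i'
  -- Step 2: saturate g d = h
  have hsat : saturate g d = h := by
    ext u v
    constructor
    · rintro (huv | ⟨hne, i, hu, hv⟩)
      · exact hgh huv
      · exact hbagsclq i hu hv hne
    · intro huv
      exact Or.inr ⟨huv.ne, hcov2 u v huv⟩
  refine ⟨⟨⟨hcov1, fun u v huv => hcov2 u v (hgh huv), hconn⟩, ?_⟩, hsat⟩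
  -- Step 3: properness with respect to g
  intro d'' hTD'' hstrict
  have hH2clq : ∀ i, (saturate g d'').IsClique (d''.β i) :=
    fun i u hu v hv hne => Or.inr ⟨hne, i, hu, hv⟩
  have hH2cov : ∀ u v, (saturate g d'').Adj u v → ∃ i, u ∈ d''.β i ∧ v ∈ d''.β i := by
    rintro u v (huv | ⟨hne, i, hu, hv⟩)
    · exact hTD''.2.1 u v huv
    · exact ⟨i, hu, hv⟩
  have hH2ch : IsChordal (saturate g d'') :=
    chordal_of_cliqueTD d'' hH2cov hTD''.2.2 hH2clq
  have hgH2 : g ≤ saturate g d'' := fun u v huv => Or.inl huv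
  have hH2h : saturate g d'' ≤ h := by
    rintro u v (huv | ⟨hne, i, hu, hv⟩)
    · exact hgh huv
    · obtain ⟨b', ⟨t, rfl⟩, hsub'⟩ := hstrict.1 (d''.β i) ⟨i, rfl⟩
      exact hbagsclq t (hsub' hu) (hsub' hv) hne
  have hH2eq : saturate g d'' = h := by
    by_contra hne
    exact hmin (saturate g d'') hgH2 (lt_of_le_of_ne hH2h hne) hH2ch
  have hTD''h : IsTD h d'' := by
    refine ⟨hTD''.1, fun u v huv => ?_, hTD''.2.2⟩
    rw [← hH2eq] at huv
    exact hH2cov u v huv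
  exact hproper d'' hTD''h hstrict

end

/-- A proper tree decomposition `d` of a minimal triangulation `h` of `g` is a
proper tree decomposition of `g`, and `saturate g d = h`. -/
theorem proper_td_of_minTri {V : Type} [Fintype V] (g h : SimpleGraph V)
    (hh : h ∈ MinTri g) (d : TreeDecomp V) (hd : IsProperTD h d) :
    IsProperTD g d ∧ saturate g d = h :=
  proper_td_of_minTri' g h hh d hd
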